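/- Let g be an invertible symmetric linear operator on ℝ^n and let g_∧ denote its exterior-power extension to Λℝ^n. Then for any pseudoscalar I ∈ Λ^n ℝ^n and Y ∈ Λℝ^n, the g⁻¹-Clifford product satisfies I ∘_{g⁻¹} Y = (det g)⁻¹ g_∧(I Y), where ∘_{g⁻¹} is the Clifford product associated to the metric g⁻¹ and I Y the Euclidean Clifford product. -/

import Mathlib

/- STATEMENT 10: For an invertible symmetric operator g on ℝⁿ, any pseudoscalar
I ∈ Λⁿℝⁿ and any multivector Y, the g⁻¹-Clifford product satisfies
I ∘_{g⁻¹} Y = (det g)⁻¹ g_∧(I Y), where I Y is the Euclidean Clifford product and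
g_∧ the exterior-power extension of g. -/

noncomputable section
open CliffordAlgebra

/-- the Euclidean quadratic form `v ↦ ⟪v,v⟫` on `ℝⁿ`. -/
def euclQ (n : ℕ) : QuadraticForm ℝ (EuclideanSpace ℝ (Fin n)) :=
  LinearMap.BilinMap.toQuadraticMap (innerₗ _ : LinearMap.BilinForm ℝ (EuclideanSpace ℝ (Fin n)))

abbrev Mv (n : ℕ) := CliffordAlgebra (euclQ n)

/-- the standard orthonormal basis vectors of `ℝⁿ`. -/
def bv (n : ℕ) (i : Fin n) : EuclideanSpace ℝ (Fin n) := EuclideanSpace.single i 1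

/-- the constant unit pseudoscalar `τ = b_1 b_2 ⋯ b_n`. -/
def tau (n : ℕ) : Mv n := (List.ofFn fun i => ι (euclQ n) (bv n i)).prod

/-- exterior product of a vector with a multivector inside the Clifford algebra. -/
def vWedge {n : ℕ} (a : EuclideanSpace ℝ (Fin n)) (x : Mv n) : Mv n :=
  (2⁻¹ : ℝ) • (ι (euclQ n) a * x + involute x * ι (euclQ n) a)

/-- left contraction of a multivector by a vector inside the Clifford algebra. -/
def vLCont {n : ℕ} (a : EuclideanSpace ℝ (Fin n)) (x : Mv n) : Mv n :=
  (2⁻¹ : ℝ) • (ι (euclQ n) a * x - involute x * ι (euclQ n) a)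

/-- the exterior-power extension (outermorphism) `f_∧` of a linear map `f`, acting on
multivectors. -/
def gext {n : ℕ} (f : EuclideanSpace ℝ (Fin n) →ₗ[ℝ] EuclideanSpace ℝ (Fin n)) :
    Mv n →ₗ[ℝ] Mv n :=
  (equivExterior (euclQ n)).symm.toLinearMap ∘ₗ
    (ExteriorAlgebra.map f).toLinearMap ∘ₗ (equivExterior (euclQ n)).toLinearMap

/-- the determinant of (the linear map underlying) a continuous linear operator. -/
def cdet {n : ℕ} (f : EuclideanSpace ℝ (Fin n) →L[ℝ] EuclideanSpace ℝ (Fin n)) : ℝ :=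
  LinearMap.det (f : EuclideanSpace ℝ (Fin n) →ₗ[ℝ] EuclideanSpace ℝ (Fin n))

/-- the quadratic form `v ↦ ⟪v, f v⟫` associated to an operator `f`. -/
def opQ {n : ℕ} (f : EuclideanSpace ℝ (Fin n) →L[ℝ] EuclideanSpace ℝ (Fin n)) :
    QuadraticForm ℝ (EuclideanSpace ℝ (Fin n)) :=
  LinearMap.BilinMap.toQuadraticMap
    (LinearMap.mk₂ ℝ (fun u v => (inner ℝ u (f v) : ℝ))
      (fun u u' v => inner_add_left _ _ _)
      (fun c u v => by beta_reduce; rw [smul_eq_mul, real_inner_smul_left])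
      (fun u v v' => by beta_reduce; rw [map_add, inner_add_right])
      (fun c u v => by beta_reduce; rw [map_smul, smul_eq_mul, real_inner_smul_right]))

/-- the Clifford product associated to the quadratic form `Q'`, transported to the
Euclidean Clifford algebra (so all products live on the same underlying space of
multivectors). -/
def cmulQ {n : ℕ} (Q' : QuadraticForm ℝ (EuclideanSpace ℝ (Fin n))) (x y : Mv n) : Mv n :=
  (equivExterior (euclQ n)).symm ((equivExterior Q')
    ((equivExterior Q').symm (equivExterior (euclQ n) x) *
     (equivExterior Q').symm (equivExterior (euclQ n) y)))

/-- the metric Hodge operator `⋆_g X = √|det g| g⁻¹_∧(X̃) τ` (pointwise data). -/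
def starG {n : ℕ} (g ginv : EuclideanSpace ℝ (Fin n) →L[ℝ] EuclideanSpace ℝ (Fin n))
    (X : Mv n) : Mv n :=
  Real.sqrt |cdet g| • (gext (ginv : _ →ₗ[ℝ] _) (reverse X) * tau n)

/-- the inverse metric Hodge operator `⋆_g⁻¹ X = (-1)^q √|det g| τ g⁻¹_∧(X̃)`. -/
def starGinv {n : ℕ} (q : ℕ) (g ginv : EuclideanSpace ℝ (Fin n) →L[ℝ] EuclideanSpace ℝ (Fin n))
    (X : Mv n) : Mv n :=
  ((-1 : ℝ) ^ q * Real.sqrt |cdet g|) • (tau n * gext (ginv : _ →ₗ[ℝ] _) (reverse X))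

/-- `X' x` is the derivative of the multivector field `X` at each `x ∈ U`, weakly. -/
def IsDerivOn {n : ℕ} (U : Set (EuclideanSpace ℝ (Fin n))) (X : EuclideanSpace ℝ (Fin n) → Mv n)
    (X' : EuclideanSpace ℝ (Fin n) → EuclideanSpace ℝ (Fin n) →ₗ[ℝ] Mv n) : Prop :=
  ∀ ℓ : Mv n →ₗ[ℝ] ℝ, ∀ x ∈ U,
    HasFDerivAt (fun y => ℓ (X y)) (LinearMap.toContinuousLinearMap (ℓ ∘ₗ X' x)) x
/-! ### Auxiliary development -/

section Aux0
open CliffordAlgebra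

variable {M : Type*} [AddCommGroup M] [Module ℝ M] {Q Q' : QuadraticForm ℝ M}
  {B : LinearMap.BilinForm ℝ M}

/-- Twisted Leibniz rule for left contraction. -/
theorem aux_contract_mul (d : Module.Dual ℝ M) (x y : CliffordAlgebra Q) :
    contractLeft (Q := Q) d (x * y) =
      contractLeft (Q := Q) d x * y + involute x * contractLeft (Q := Q) d y := by
  induction x using CliffordAlgebra.left_induction with
  | algebraMap r =>
      rw [contractLeft_algebraMap_mul, contractLeft_algebraMap, zero_mul, zero_add,
        involute.commutes]
  | add a b ha hb =>
      rw [add_mul, map_add, ha, hb, map_add, map_add, add_mul, add_mul]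
      abel
  | ι_mul a m ha =>
      rw [mul_assoc, contractLeft_ι_mul, ha, contractLeft_ι_mul, map_mul, involute_ι,
        sub_mul, smul_mul_assoc, mul_add, neg_mul, neg_mul, mul_assoc, mul_assoc]
      abel

/-- Contraction anticommutes with the grade involution. -/
theorem aux_involute_contract (d : Module.Dual ℝ M) (x : CliffordAlgebra Q) :
    involute (contractLeft (Q := Q) d x) = - contractLeft (Q := Q) d (involute x) := by
  induction x using CliffordAlgebra.left_induction with
  | algebraMap r => simp
  | add a b ha hb => rw [map_add, map_add, ha, hb, map_add, map_add, neg_add]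
  | ι_mul a m ha =>
      have hR : contractLeft (Q := Q) d (involute ((ι Q) m * a))
          = -(d m • involute a - ι Q m * contractLeft (Q := Q) d (involute a)) := by
        rw [map_mul, involute_ι, neg_mul, map_neg, contractLeft_ι_mul]
      rw [hR, contractLeft_ι_mul, map_sub, map_smul, map_mul, involute_ι, ha]
      simp only [neg_mul, mul_neg, neg_neg, neg_sub, sub_neg_eq_add]

/-- `contractLeft` of an involution. -/
theorem aux_contract_involute (d : Module.Dual ℝ M) (x : CliffordAlgebra Q) :
    contractLeft (Q := Q) d (involute x) = - involute (contractLeft (Q := Q) d x) := by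
  rw [aux_involute_contract, neg_neg]

/-- `changeForm` commutes with the grade involution. -/
theorem aux_changeForm_involute (h : B.toQuadraticMap = Q' - Q) (x : CliffordAlgebra Q) :
    changeForm h (involute x) = involute (changeForm h x) := by
  induction x using CliffordAlgebra.left_induction with
  | algebraMap r => simp
  | add a b ha hb => rw [map_add, map_add, ha, hb, map_add, map_add]
  | ι_mul a m ha =>
      rw [map_mul, involute_ι, neg_mul, map_neg, changeForm_ι_mul, changeForm_ι_mul, ha,
        map_sub, map_mul, involute_ι, neg_mul, aux_contract_involute]
      abel

/-- Contraction of the symmetrized product. -/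
theorem aux_contract_A (d : Module.Dual ℝ M) (u : M) (z : CliffordAlgebra Q) :
    contractLeft (Q := Q) d (ι Q u * z + involute z * ι Q u) =
      (2 * d u) • z - (ι Q u * contractLeft (Q := Q) d z
        + involute (contractLeft (Q := Q) d z) * ι Q u) := by
  rw [map_add, contractLeft_ι_mul, aux_contract_mul, aux_contract_involute, involute_involute,
    contractLeft_ι, ← Algebra.commutes, ← Algebra.smul_def, neg_mul, two_mul, add_smul]
  abel

/-- `changeForm` commutes with the symmetrized (wedge-type) product, for symmetric `B`. -/
theorem aux_changeForm_A (h : B.toQuadraticMap = Q' - Q) (hB : ∀ a b, B a b = B b a)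
    (u : M) (x : CliffordAlgebra Q) :
    changeForm h (ι Q u * x + involute x * ι Q u) =
      ι Q' u * changeForm h x + involute (changeForm h x) * ι Q' u := by
  have hpol : ∀ m : M, QuadraticMap.polar ⇑Q' u m
      = QuadraticMap.polar ⇑Q u m + 2 * B m u := by
    intro m
    have h1 := DFunLike.congr_fun h (u + m)
    have h2 := DFunLike.congr_fun h u
    have h3 := DFunLike.congr_fun h m
    simp only [LinearMap.BilinMap.toQuadraticMap_apply, QuadraticMap.sub_apply,
      map_add, LinearMap.add_apply] at h1 h2 h3
    have hsymm := hB u m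
    simp only [QuadraticMap.polar]
    linarith
  induction x using CliffordAlgebra.left_induction with
  | algebraMap r =>
      rw [involute.commutes,
        show ι Q u * (algebraMap ℝ (CliffordAlgebra Q) r) = r • ι Q u from by
          rw [← Algebra.commutes, ← Algebra.smul_def],
        show (algebraMap ℝ (CliffordAlgebra Q) r) * ι Q u = r • ι Q u from
          (Algebra.smul_def r _).symm,
        changeForm_algebraMap, involute.commutes,
        show ι Q' u * (algebraMap ℝ (CliffordAlgebra Q') r) = r • ι Q' u from by
          rw [← Algebra.commutes, ← Algebra.smul_def],
        show (algebraMap ℝ (CliffordAlgebra Q') r) * ι Q' u = r • ι Q' u from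
          (Algebra.smul_def r _).symm]
      simp [changeForm_ι]
  | add a b ha hb =>
      have hsplit : ι Q u * (a + b) + involute (a + b) * ι Q u
          = (ι Q u * a + involute a * ι Q u) + (ι Q u * b + involute b * ι Q u) := by
        rw [map_add, mul_add, add_mul]
        abel
      rw [hsplit, map_add, ha, hb, map_add, map_add, mul_add, add_mul]
      abel
  | ι_mul a m ha =>
      -- rewrite the inner expression
      have hinner : ι Q u * (ι Q m * a) + involute (ι Q m * a) * ι Q u
          = QuadraticMap.polar ⇑Q u m • a - ι Q m * (ι Q u * a + involute a * ι Q u) := by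
        rw [map_mul, involute_ι, ← mul_assoc, ι_mul_ι_comm, neg_mul, neg_mul, sub_mul,
          ← Algebra.smul_def, mul_add, mul_assoc]
        simp only [mul_assoc]
        abel
      have hinner' : ι Q' u * (changeForm h (ι Q m * a))
            + involute (changeForm h (ι Q m * a)) * ι Q' u
          = QuadraticMap.polar ⇑Q' u m • changeForm h a
            - ι Q' m * (ι Q' u * changeForm h a + involute (changeForm h a) * ι Q' u)
            - ((2 * B m u) • changeForm h a
              - contractLeft (Q := Q') (B m) (ι Q' u * changeForm h a
                + involute (changeForm h a) * ι Q' u)) := by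
        rw [aux_contract_A, changeForm_ι_mul]
        rw [mul_sub, map_sub, sub_mul, map_mul, involute_ι, ← mul_assoc, ι_mul_ι_comm,
          neg_mul, neg_mul, sub_mul, ← Algebra.smul_def, mul_add, mul_assoc,
          aux_involute_contract]
        simp only [mul_assoc, neg_mul, mul_neg, neg_neg, sub_neg_eq_add, neg_sub]
        abel
      rw [hinner, map_sub, map_smul, changeForm_ι_mul, ha, hinner', hpol m, add_smul]
      abel

/-- Contraction lowers the filtration degree. -/
theorem aux_contract_pow (d : Module.Dual ℝ M) (k : ℕ) (x : CliffordAlgebra Q)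
    (hx : x ∈ (LinearMap.range (ι Q)) ^ k) :
    contractLeft (Q := Q) d x ∈ (LinearMap.range (ι Q)) ^ (k - 1) := by
  induction k generalizing x with
  | zero =>
      rw [pow_zero] at hx
      obtain ⟨r, rfl⟩ := Submodule.mem_one.mp hx
      rw [contractLeft_algebraMap]
      exact Submodule.zero_mem _
  | succ k IH =>
      rw [pow_succ'] at hx
      simp only [Nat.add_sub_cancel]
      refine Submodule.mul_induction_on hx (fun m hm y hy => ?_)
        fun a b hA hB => by rw [map_add]; exact Submodule.add_mem _ hA hB
      obtain ⟨v, rfl⟩ := hm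
      rw [contractLeft_ι_mul]
      refine Submodule.sub_mem _ (Submodule.smul_mem _ _ hy) ?_
      cases k with
      | zero =>
          rw [pow_zero] at hy
          obtain ⟨r, rfl⟩ := Submodule.mem_one.mp hy
          rw [contractLeft_algebraMap, mul_zero]
          exact Submodule.zero_mem _
      | succ k =>
          have h1 := IH y hy
          rw [Nat.add_sub_cancel] at h1
          rw [pow_succ']
          exact Submodule.mul_mem_mul (LinearMap.mem_range_self _ _) h1

/-- changeForm cancel, forward. -/
theorem aux_cf_cancel (h : B.toQuadraticMap = Q' - Q) (z : CliffordAlgebra Q') :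
    changeForm h (changeForm (CliffordAlgebra.changeForm.neg_proof h) z) = z := by
  have := (changeFormEquiv h).apply_symm_apply z
  rwa [changeFormEquiv_symm, changeFormEquiv_apply, changeFormEquiv_apply] at this

/-- changeForm cancel, backward. -/
theorem aux_cf_cancel' (h : B.toQuadraticMap = Q' - Q) (z : CliffordAlgebra Q) :
    changeForm (CliffordAlgebra.changeForm.neg_proof h) (changeForm h z) = z := by
  have := (changeFormEquiv h).symm_apply_apply z
  rwa [changeFormEquiv_symm, changeFormEquiv_apply, changeFormEquiv_apply] at this

/-- `changeForm` is injective. -/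
theorem aux_cf_inj (h : B.toQuadraticMap = Q' - Q) {a b : CliffordAlgebra Q}
    (hab : changeForm h a = changeForm h b) : a = b := by
  have := congrArg (changeForm (CliffordAlgebra.changeForm.neg_proof h)) hab
  rwa [aux_cf_cancel' h, aux_cf_cancel' h] at this

/-- products of `ι`'s against a single `ι` anticommute in the exterior algebra. -/
theorem aux_prod_mul_iota (l : List M) (u : M) :
    ((l.map (ι (0 : QuadraticForm ℝ M))).prod) * ι (0 : QuadraticForm ℝ M) u =
      ((-1 : ℝ)) ^ l.length •
        (ι (0 : QuadraticForm ℝ M) u * (l.map (ι (0 : QuadraticForm ℝ M))).prod) := by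
  induction l with
  | nil => simp
  | cons a t ih =>
      have h0 : ι (0 : QuadraticForm ℝ M) a * ι (0 : QuadraticForm ℝ M) u
          + ι (0 : QuadraticForm ℝ M) u * ι (0 : QuadraticForm ℝ M) a = 0 := by
        rw [ι_mul_ι_add_swap]
        simp [QuadraticMap.polar]
      have hanti := eq_neg_of_add_eq_zero_left h0
      simp only [List.map_cons, List.prod_cons, List.length_cons]
      rw [mul_assoc, ih, mul_smul_comm, ← mul_assoc, hanti, neg_mul, mul_assoc, pow_succ,
        mul_smul, neg_one_smul, smul_neg]

/-- a repeated factor kills an exterior product. -/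
theorem aux_iota_mem_prod_zero (l : List M) (u : M) (hu : u ∈ l) :
    ι (0 : QuadraticForm ℝ M) u * (l.map (ι (0 : QuadraticForm ℝ M))).prod = 0 := by
  induction l with
  | nil => simp at hu
  | cons a t ih =>
      simp only [List.map_cons, List.prod_cons]
      rcases List.mem_cons.mp hu with rfl | hu'
      · rw [← mul_assoc, ι_sq_scalar]
        simp
      · have h0 : ι (0 : QuadraticForm ℝ M) u * ι (0 : QuadraticForm ℝ M) a
            + ι (0 : QuadraticForm ℝ M) a * ι (0 : QuadraticForm ℝ M) u = 0 := by
          rw [ι_mul_ι_add_swap]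
          simp [QuadraticMap.polar]
        rw [← mul_assoc, eq_neg_of_add_eq_zero_left h0, neg_mul, mul_assoc, ih hu',
          mul_zero, neg_zero]

/-- contraction by a dual vanishing on each factor kills an exterior product. -/
theorem aux_contract_prod_zero (d : Module.Dual ℝ M) (l : List M) (hl : ∀ a ∈ l, d a = 0) :
    contractLeft (Q := (0 : QuadraticForm ℝ M)) d ((l.map (ι (0 : QuadraticForm ℝ M))).prod)
      = 0 := by
  induction l with
  | nil => simp
  | cons a t ih =>
      simp only [List.map_cons, List.prod_cons]
      rw [contractLeft_ι_mul, hl a (List.mem_cons_self), ih fun b hb => hl b (List.mem_cons_of_mem _ hb)]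
      simp

/-- `changeForm` sends an orthogonal blade to the corresponding exterior blade. -/
theorem aux_changeForm_blade (h : B.toQuadraticMap = 0 - Q) (l : List M)
    (hl : l.Pairwise fun a b => B a b = 0) :
    changeForm h ((l.map (ι Q)).prod) = (l.map (ι (0 : QuadraticForm ℝ M))).prod := by
  induction l with
  | nil => simp
  | cons a t ih =>
      rw [List.pairwise_cons] at hl
      simp only [List.map_cons, List.prod_cons]
      rw [changeForm_ι_mul, ih hl.2, aux_contract_prod_zero _ _ hl.1, sub_zero]

end Aux0


section Aux1
open CliffordAlgebra

variable {n : ℕ}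

/-- the exterior blade of the standard basis vectors. -/
def omeg (n : ℕ) : CliffordAlgebra (0 : QuadraticForm ℝ (EuclideanSpace ℝ (Fin n))) :=
  ((List.ofFn (bv n)).map (ι (0 : QuadraticForm ℝ (EuclideanSpace ℝ (Fin n))))).prod

theorem aux_tau_eq : tau n = ((List.ofFn (bv n)).map (ι (euclQ n))).prod := by
  rw [tau, List.map_ofFn]
  rfl

theorem aux_euclQ_apply (u : EuclideanSpace ℝ (Fin n)) : euclQ n u = (inner ℝ u u : ℝ) := by
  simp [euclQ, LinearMap.BilinMap.toQuadraticMap_apply]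

theorem aux_opQ_apply (f : EuclideanSpace ℝ (Fin n) →L[ℝ] EuclideanSpace ℝ (Fin n))
    (u : EuclideanSpace ℝ (Fin n)) : opQ f u = (inner ℝ u (f u) : ℝ) := by
  simp [opQ, LinearMap.BilinMap.toQuadraticMap_apply]

theorem aux_assoc_apply (Q : QuadraticForm ℝ (EuclideanSpace ℝ (Fin n)))
    (u v : EuclideanSpace ℝ (Fin n)) :
    QuadraticMap.associated (R := ℝ) Q u v = (Q (u + v) - Q u - Q v) / 2 := by
  have h := QuadraticMap.two_nsmul_associated ℝ Q
  have h2 := DFunLike.congr_fun (DFunLike.congr_fun h u) v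
  simp only [LinearMap.smul_apply, QuadraticMap.polarBilin_apply_apply, smul_eq_mul,
    nsmul_eq_mul, Nat.cast_ofNat, QuadraticMap.polar] at h2
  have : QuadraticMap.associated (R := ℝ) Q u v
      = QuadraticMap.associatedHom (R := ℝ) ℝ Q u v := rfl
  rw [this]
  linarith

theorem aux_ginv_symm (g ginv : EuclideanSpace ℝ (Fin n) →L[ℝ] EuclideanSpace ℝ (Fin n))
    (hsym : ∀ u v, (inner ℝ (g u) v : ℝ) = inner ℝ u (g v))
    (hinv : g.comp ginv = ContinuousLinearMap.id ℝ _ ∧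
            ginv.comp g = ContinuousLinearMap.id ℝ _) :
    ∀ u v, (inner ℝ (ginv u) v : ℝ) = inner ℝ u (ginv v) := by
  have hgg : ∀ w, g (ginv w) = w := fun w => by
    have := ContinuousLinearMap.ext_iff.mp hinv.1 w
    simpa using this
  intro u v
  calc (inner ℝ (ginv u) v : ℝ) = inner ℝ (ginv u) (g (ginv v)) := by rw [hgg]
    _ = inner ℝ (g (ginv u)) (ginv v) := (hsym _ _).symm
    _ = inner ℝ u (ginv v) := by rw [hgg]

theorem aux_B0_apply (u w : EuclideanSpace ℝ (Fin n)) :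
    QuadraticMap.associated (R := ℝ) (-(euclQ n)) u w = -(inner ℝ u w : ℝ) := by
  rw [aux_assoc_apply]
  simp only [QuadraticMap.neg_apply, aux_euclQ_apply]
  rw [real_inner_add_add_self]
  ring

theorem aux_B0'_apply (g ginv : EuclideanSpace ℝ (Fin n) →L[ℝ] EuclideanSpace ℝ (Fin n))
    (hsym : ∀ u v, (inner ℝ (g u) v : ℝ) = inner ℝ u (g v))
    (hinv : g.comp ginv = ContinuousLinearMap.id ℝ _ ∧
            ginv.comp g = ContinuousLinearMap.id ℝ _)
    (u w : EuclideanSpace ℝ (Fin n)) :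
    QuadraticMap.associated (R := ℝ) (-(opQ ginv)) u w = -(inner ℝ u (ginv w) : ℝ) := by
  have hs := aux_ginv_symm g ginv hsym hinv
  rw [aux_assoc_apply]
  simp only [QuadraticMap.neg_apply, aux_opQ_apply, map_add]
  rw [inner_add_left, inner_add_right, inner_add_right]
  have : (inner ℝ w (ginv u) : ℝ) = inner ℝ u (ginv w) := by
    rw [← hs u w, real_inner_comm]
  rw [this]
  ring

theorem aux_iota_omeg (u : EuclideanSpace ℝ (Fin n)) :
    ι (0 : QuadraticForm ℝ (EuclideanSpace ℝ (Fin n))) u * omeg n = 0 := by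
  have hb : ∀ i, ((EuclideanSpace.basisFun (Fin n) ℝ).toBasis : Fin n → EuclideanSpace ℝ (Fin n)) i
      = bv n i := fun i => by
    rw [OrthonormalBasis.coe_toBasis, EuclideanSpace.basisFun_apply]
    rfl
  conv_lhs => rw [← Module.Basis.sum_repr (EuclideanSpace.basisFun (Fin n) ℝ).toBasis u]
  rw [map_sum, Finset.sum_mul]
  refine Finset.sum_eq_zero fun i _ => ?_
  rw [map_smul, smul_mul_assoc, hb i, omeg,
    aux_iota_mem_prod_zero _ _ (List.mem_ofFn.mpr ⟨i, rfl⟩), smul_zero]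

theorem aux_omeg_iota (u : EuclideanSpace ℝ (Fin n)) :
    omeg n * ι (0 : QuadraticForm ℝ (EuclideanSpace ℝ (Fin n))) u = 0 := by
  rw [omeg, aux_prod_mul_iota]
  rw [show ((List.ofFn (bv n)).map
      (ι (0 : QuadraticForm ℝ (EuclideanSpace ℝ (Fin n))))).prod = omeg n from rfl]
  rw [aux_iota_omeg, smul_zero]

theorem aux_invol_omeg : involute (omeg n) = ((-1 : ℝ)) ^ n • omeg n := by
  rw [omeg, involute_prod_map_ι, List.length_ofFn]

theorem aux_top_invol {QX : QuadraticForm ℝ (EuclideanSpace ℝ (Fin n))}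
    {BX : LinearMap.BilinForm ℝ (EuclideanSpace ℝ (Fin n))}
    (hX : BX.toQuadraticMap = QX - 0) :
    involute (changeForm hX (omeg n)) = ((-1 : ℝ)) ^ n • changeForm hX (omeg n) := by
  rw [← aux_changeForm_involute hX, aux_invol_omeg, map_smul]

theorem aux_pow_neg_one_sq : ((-1 : ℝ)) ^ n * ((-1 : ℝ)) ^ n = 1 := by
  rw [← pow_add]
  exact Even.neg_one_pow ⟨n, rfl⟩

theorem aux_top_comm {QX : QuadraticForm ℝ (EuclideanSpace ℝ (Fin n))}
    {BX : LinearMap.BilinForm ℝ (EuclideanSpace ℝ (Fin n))}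
    (hX : BX.toQuadraticMap = QX - 0) (hB : ∀ a b, BX a b = BX b a)
    (u : EuclideanSpace ℝ (Fin n)) :
    changeForm hX (omeg n) * ι QX u
      = ((-1 : ℝ)) ^ (n + 1) • (ι QX u * changeForm hX (omeg n)) := by
  have hA := aux_changeForm_A hX hB u (omeg n)
  rw [aux_iota_omeg, aux_invol_omeg, zero_add, smul_mul_assoc, aux_omeg_iota, smul_zero,
    map_zero] at hA
  have h2 : involute (changeForm hX (omeg n)) * ι QX u
      = -(ι QX u * changeForm hX (omeg n)) :=
    eq_neg_of_add_eq_zero_right hA.symm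
  rw [aux_top_invol hX, smul_mul_assoc] at h2
  have h3 := congrArg (fun z => ((-1 : ℝ)) ^ n • z) h2
  simp only at h3
  rw [smul_smul, aux_pow_neg_one_sq, one_smul, smul_neg] at h3
  rw [h3, pow_succ, mul_smul, neg_one_smul, smul_neg]

/-- the change-of-form proof for the euclidean form. -/
theorem thQe (n : ℕ) :
    LinearMap.BilinMap.toQuadraticMap (QuadraticMap.associated (R := ℝ) (-(euclQ n)))
      = 0 - euclQ n :=
  CliffordAlgebra.changeForm.associated_neg_proof

/-- the change-of-form proof for the metric form. -/
theorem thQp {n : ℕ} (ginv : EuclideanSpace ℝ (Fin n) →L[ℝ] EuclideanSpace ℝ (Fin n)) :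
    LinearMap.BilinMap.toQuadraticMap (QuadraticMap.associated (R := ℝ) (-(opQ ginv)))
      = 0 - opQ ginv :=
  CliffordAlgebra.changeForm.associated_neg_proof

theorem aux_e_tau : changeForm (thQe n) (tau n) = omeg n := by
  rw [aux_tau_eq, omeg]
  refine aux_changeForm_blade _ _ (List.pairwise_ofFn.mpr fun i j hij => ?_)
  rw [aux_B0_apply]
  rw [show bv n i = EuclideanSpace.single i (1 : ℝ) from rfl,
    show bv n j = EuclideanSpace.single j (1 : ℝ) from rfl]
  rw [EuclideanSpace.inner_single_left]
  rw [EuclideanSpace.single_apply]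
  simp [Fin.ne_of_lt hij, (Fin.ne_of_lt hij).symm]

theorem aux_tau_via : changeForm (CliffordAlgebra.changeForm.neg_proof (thQe n)) (omeg n)
    = tau n := by
  rw [← aux_e_tau]
  exact aux_cf_cancel' (thQe n) (tau n)

theorem aux_negB0_symm : ∀ a b : EuclideanSpace ℝ (Fin n),
    (-(QuadraticMap.associated (R := ℝ) (-(euclQ n)))) a b
      = (-(QuadraticMap.associated (R := ℝ) (-(euclQ n)))) b a := by
  intro a b
  simp only [LinearMap.neg_apply, aux_B0_apply, neg_neg]
  exact real_inner_comm b a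

theorem aux_invol_tau : involute (tau n) = ((-1 : ℝ)) ^ n • tau n := by
  rw [← aux_tau_via, aux_top_invol]

theorem aux_tau_comm (u : EuclideanSpace ℝ (Fin n)) :
    tau n * ι (euclQ n) u = ((-1 : ℝ)) ^ (n + 1) • (ι (euclQ n) u * tau n) := by
  rw [← aux_tau_via]
  exact aux_top_comm _ aux_negB0_symm u

theorem aux_map_contract (f finv : EuclideanSpace ℝ (Fin n) →ₗ[ℝ] EuclideanSpace ℝ (Fin n))
    (hfi : ∀ v, finv (f v) = v) (d : Module.Dual ℝ (EuclideanSpace ℝ (Fin n)))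
    (z : ExteriorAlgebra ℝ (EuclideanSpace ℝ (Fin n))) :
    ExteriorAlgebra.map f (contractLeft (Q := (0 : QuadraticForm ℝ _)) d z)
      = contractLeft (Q := (0 : QuadraticForm ℝ _)) (d ∘ₗ finv) (ExteriorAlgebra.map f z) := by
  induction z using CliffordAlgebra.left_induction with
  | algebraMap r => simp [contractLeft_algebraMap]
  | add a b ha hb => rw [map_add, map_add, ha, hb, map_add, map_add]
  | ι_mul a m ha =>
      have hmap : ExteriorAlgebra.map f (ι (0 : QuadraticForm ℝ _) m * a)
          = ι (0 : QuadraticForm ℝ _) (f m) * ExteriorAlgebra.map f a := by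
        rw [map_mul]
        congr 1
        exact ExteriorAlgebra.map_apply_ι f m
      rw [contractLeft_ι_mul, map_sub, map_smul, map_mul,
        show ExteriorAlgebra.map f (ι (0 : QuadraticForm ℝ _) m)
          = ι (0 : QuadraticForm ℝ _) (f m) from ExteriorAlgebra.map_apply_ι f m,
        ha, hmap, contractLeft_ι_mul]
      simp [LinearMap.comp_apply, hfi]

theorem aux_alt {W : Type*} [AddCommGroup W] [Module ℝ W]
    (F : (EuclideanSpace ℝ (Fin n)) [⋀^Fin n]→ₗ[ℝ] W)
    (v : Fin n → EuclideanSpace ℝ (Fin n)) :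
    F v = ((EuclideanSpace.basisFun (Fin n) ℝ).toBasis.det v) •
      F ⇑(EuclideanSpace.basisFun (Fin n) ℝ).toBasis := by
  rw [← sub_eq_zero, ← Module.forall_dual_apply_eq_zero_iff ℝ]
  intro φ
  have hb := AlternatingMap.eq_smul_basis_det
    (e := (EuclideanSpace.basisFun (Fin n) ℝ).toBasis) (φ.compAlternatingMap F)
  have hv := DFunLike.congr_fun hb v
  simp only [LinearMap.compAlternatingMap_apply, AlternatingMap.smul_apply, smul_eq_mul] at hv
  rw [map_sub, map_smul, hv, smul_eq_mul, mul_comm, sub_self]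

theorem aux_map_omeg (f : EuclideanSpace ℝ (Fin n) →ₗ[ℝ] EuclideanSpace ℝ (Fin n)) :
    ExteriorAlgebra.map f (omeg n) = LinearMap.det f • omeg n := by
  have hb : ⇑(EuclideanSpace.basisFun (Fin n) ℝ).toBasis = bv n := funext fun i => by
    rw [OrthonormalBasis.coe_toBasis, EuclideanSpace.basisFun_apply]
    rfl
  have h1 : omeg n = ExteriorAlgebra.ιMulti ℝ n (bv n) := by
    rw [ExteriorAlgebra.ιMulti_apply, omeg, List.map_ofFn]
    rfl
  rw [h1, ExteriorAlgebra.map_apply_ιMulti,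
    aux_alt (ExteriorAlgebra.ιMulti ℝ n) (⇑f ∘ bv n), hb]
  congr 1
  rw [← hb, Module.Basis.det_comp, Module.Basis.det_self, mul_one]

theorem aux_cdet {n : ℕ} (g : EuclideanSpace ℝ (Fin n) →L[ℝ] EuclideanSpace ℝ (Fin n)) :
    cdet g = LinearMap.det (g : EuclideanSpace ℝ (Fin n) →ₗ[ℝ] EuclideanSpace ℝ (Fin n)) := rfl

theorem aux_det_ne {n : ℕ} (g ginv : EuclideanSpace ℝ (Fin n) →L[ℝ] EuclideanSpace ℝ (Fin n))
    (hinv : g.comp ginv = ContinuousLinearMap.id ℝ _ ∧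
            ginv.comp g = ContinuousLinearMap.id ℝ _) : cdet g ≠ 0 := by
  have h1 : (↑(g.comp ginv) : EuclideanSpace ℝ (Fin n) →ₗ[ℝ] EuclideanSpace ℝ (Fin n))
      = (↑g : EuclideanSpace ℝ (Fin n) →ₗ[ℝ] EuclideanSpace ℝ (Fin n)) ∘ₗ
        (↑ginv : EuclideanSpace ℝ (Fin n) →ₗ[ℝ] EuclideanSpace ℝ (Fin n)) :=
    ContinuousLinearMap.toLinearMap_comp g ginv
  have h2 := congrArg (fun f : EuclideanSpace ℝ (Fin n) →L[ℝ] EuclideanSpace ℝ (Fin n) =>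
    LinearMap.det (↑f : EuclideanSpace ℝ (Fin n) →ₗ[ℝ] EuclideanSpace ℝ (Fin n))) hinv.1
  simp only at h2
  rw [h1] at h2
  rw [LinearMap.det_comp] at h2
  have h3 : LinearMap.det ((ContinuousLinearMap.id ℝ (EuclideanSpace ℝ (Fin n)))
      : EuclideanSpace ℝ (Fin n) →ₗ[ℝ] EuclideanSpace ℝ (Fin n)) = 1 := by
    rw [show ((ContinuousLinearMap.id ℝ (EuclideanSpace ℝ (Fin n)))
        : EuclideanSpace ℝ (Fin n) →ₗ[ℝ] EuclideanSpace ℝ (Fin n)) = LinearMap.id from rfl,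
      LinearMap.det_id]
  rw [h3] at h2
  rw [aux_cdet]
  exact left_ne_zero_of_mul_eq_one h2

end Aux1


section Main
open CliffordAlgebra

variable {n : ℕ}

/-- the transported pseudoscalar in the metric Clifford algebra. -/
def wps (ginv : EuclideanSpace ℝ (Fin n) →L[ℝ] EuclideanSpace ℝ (Fin n)) :
    CliffordAlgebra (opQ ginv) :=
  changeForm (CliffordAlgebra.changeForm.neg_proof (thQp ginv)) (omeg n)

/-- the left-hand side of the main identity, as a linear map. -/
def Lmap (ginv : EuclideanSpace ℝ (Fin n) →L[ℝ] EuclideanSpace ℝ (Fin n)) :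
    Mv n →ₗ[ℝ] CliffordAlgebra (0 : QuadraticForm ℝ (EuclideanSpace ℝ (Fin n))) :=
  (changeForm (thQp ginv)) ∘ₗ (LinearMap.mulLeft ℝ (wps ginv)) ∘ₗ
    (changeForm (CliffordAlgebra.changeForm.neg_proof (thQp ginv))) ∘ₗ (changeForm (thQe n))

/-- the right-hand side of the main identity, as a linear map. -/
def Rmap (g ginv : EuclideanSpace ℝ (Fin n) →L[ℝ] EuclideanSpace ℝ (Fin n)) :
    Mv n →ₗ[ℝ] CliffordAlgebra (0 : QuadraticForm ℝ (EuclideanSpace ℝ (Fin n))) :=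
  (cdet g)⁻¹ • ((ExteriorAlgebra.map
      ((g : EuclideanSpace ℝ (Fin n) →ₗ[ℝ] EuclideanSpace ℝ (Fin n)))).toLinearMap ∘ₗ
    (changeForm (thQe n)) ∘ₗ (LinearMap.mulLeft ℝ (tau n)))

theorem Lmap_apply (ginv : EuclideanSpace ℝ (Fin n) →L[ℝ] EuclideanSpace ℝ (Fin n)) (Y : Mv n) :
    Lmap ginv Y = changeForm (thQp ginv) (wps ginv *
      changeForm (CliffordAlgebra.changeForm.neg_proof (thQp ginv)) (changeForm (thQe n) Y)) := by
  simp [Lmap, LinearMap.mulLeft_apply]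

theorem Rmap_apply (g ginv : EuclideanSpace ℝ (Fin n) →L[ℝ] EuclideanSpace ℝ (Fin n)) (Y : Mv n) :
    Rmap g ginv Y = (cdet g)⁻¹ • ExteriorAlgebra.map
      ((g : EuclideanSpace ℝ (Fin n) →ₗ[ℝ] EuclideanSpace ℝ (Fin n)))
      (changeForm (thQe n) (tau n * Y)) := by
  simp [Rmap, LinearMap.mulLeft_apply]

theorem wps_def (ginv : EuclideanSpace ℝ (Fin n) →L[ℝ] EuclideanSpace ℝ (Fin n)) :
    wps ginv = changeForm (CliffordAlgebra.changeForm.neg_proof (thQp ginv)) (omeg n) := rfl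

set_option maxHeartbeats 2000000 in
theorem aux_step (g ginv : EuclideanSpace ℝ (Fin n) →L[ℝ] EuclideanSpace ℝ (Fin n))
    (hsym : ∀ u v, (inner ℝ (g u) v : ℝ) = inner ℝ u (g v))
    (hinv : g.comp ginv = ContinuousLinearMap.id ℝ _ ∧
            ginv.comp g = ContinuousLinearMap.id ℝ _)
    (v : EuclideanSpace ℝ (Fin n)) (x : Mv n)
    (IH1 : Lmap ginv x = Rmap g ginv x)
    (IH2 : Lmap ginv (contractLeft (Q := euclQ n)
        (QuadraticMap.associated (R := ℝ) (-(euclQ n)) v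
          - QuadraticMap.associated (R := ℝ) (-(opQ ginv)) v) x)
      = Rmap g ginv (contractLeft (Q := euclQ n)
        (QuadraticMap.associated (R := ℝ) (-(euclQ n)) v
          - QuadraticMap.associated (R := ℝ) (-(opQ ginv)) v) x)) :
    Lmap ginv (ι (euclQ n) v * x) = Rmap g ginv (ι (euclQ n) v * x) := by
  have hgg : ∀ w, g (ginv w) = w := fun w => by
    have := ContinuousLinearMap.ext_iff.mp hinv.1 w
    simpa using this
  have hig : ∀ w, ginv (g w) = w := fun w => by
    have := ContinuousLinearMap.ext_iff.mp hinv.2 w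
    simpa using this
  have hgs := aux_ginv_symm g ginv hsym hinv
  have hBp'sym : ∀ a b : EuclideanSpace ℝ (Fin n),
      (-(QuadraticMap.associated (R := ℝ) (-(opQ ginv)))) a b
        = (-(QuadraticMap.associated (R := ℝ) (-(opQ ginv)))) b a := by
    intro a b
    simp only [LinearMap.neg_apply, aux_B0'_apply g ginv hsym hinv, neg_neg]
    rw [← hgs a b, real_inner_comm]
  have hdual1 : (QuadraticMap.associated (R := ℝ) (-(euclQ n)) v) ∘ₗ
        ((ginv : EuclideanSpace ℝ (Fin n) →ₗ[ℝ] EuclideanSpace ℝ (Fin n)))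
      = QuadraticMap.associated (R := ℝ) (-(opQ ginv)) v := by
    ext w
    simp only [LinearMap.comp_apply, ContinuousLinearMap.coe_coe, aux_B0_apply,
      aux_B0'_apply g ginv hsym hinv]
  have hdual2 : QuadraticMap.associated (R := ℝ) (-(euclQ n)) v
        - QuadraticMap.associated (R := ℝ) (-(opQ ginv)) v
      = QuadraticMap.associated (R := ℝ) (-(euclQ n)) (v - ginv v) := by
    ext w
    simp only [LinearMap.sub_apply, aux_B0_apply, aux_B0'_apply g ginv hsym hinv]
    rw [inner_sub_left, ← hgs v w]
    ring
  -- anticommutation of the transported pseudoscalar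
  have hwcomm : wps ginv * ι (opQ ginv) v
      = ((-1 : ℝ)) ^ (n + 1) • (ι (opQ ginv) v * wps ginv) := by
    rw [wps_def]
    exact aux_top_comm _ hBp'sym v
  -- expansion of the transported product
  have hT : changeForm (CliffordAlgebra.changeForm.neg_proof (thQp ginv))
      (changeForm (thQe n) (ι (euclQ n) v * x))
      = ι (opQ ginv) v * changeForm (CliffordAlgebra.changeForm.neg_proof (thQp ginv))
          (changeForm (thQe n) x)
        - contractLeft (Q := opQ ginv)
            (QuadraticMap.associated (R := ℝ) (-(euclQ n)) v
              - QuadraticMap.associated (R := ℝ) (-(opQ ginv)) v)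
            (changeForm (CliffordAlgebra.changeForm.neg_proof (thQp ginv))
              (changeForm (thQe n) x)) := by
    rw [changeForm_ι_mul, map_sub, changeForm_ι_mul, changeForm_contractLeft,
      map_sub, LinearMap.sub_apply]
    simp only [LinearMap.neg_apply, map_neg, LinearMap.neg_apply, sub_neg_eq_add]
    abel
  have hTc : changeForm (CliffordAlgebra.changeForm.neg_proof (thQp ginv))
      (changeForm (thQe n) (contractLeft (Q := euclQ n)
        (QuadraticMap.associated (R := ℝ) (-(euclQ n)) v
          - QuadraticMap.associated (R := ℝ) (-(opQ ginv)) v) x))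
      = contractLeft (Q := opQ ginv)
          (QuadraticMap.associated (R := ℝ) (-(euclQ n)) v
            - QuadraticMap.associated (R := ℝ) (-(opQ ginv)) v)
          (changeForm (CliffordAlgebra.changeForm.neg_proof (thQp ginv))
            (changeForm (thQe n) x)) := by
    rw [changeForm_contractLeft, changeForm_contractLeft]
  -- IH, unfolded forms
  have hLx : changeForm (thQp ginv) (wps ginv *
      changeForm (CliffordAlgebra.changeForm.neg_proof (thQp ginv)) (changeForm (thQe n) x))
      = (cdet g)⁻¹ • ExteriorAlgebra.map
          ((g : EuclideanSpace ℝ (Fin n) →ₗ[ℝ] EuclideanSpace ℝ (Fin n)))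
          (changeForm (thQe n) (tau n * x)) := by
    have h := IH1
    rw [Lmap_apply, Rmap_apply] at h
    exact h
  have hIH2u : changeForm (thQp ginv) (wps ginv *
      changeForm (CliffordAlgebra.changeForm.neg_proof (thQp ginv))
        (changeForm (thQe n) (contractLeft (Q := euclQ n)
          (QuadraticMap.associated (R := ℝ) (-(euclQ n)) v
            - QuadraticMap.associated (R := ℝ) (-(opQ ginv)) v) x)))
      = (cdet g)⁻¹ • ExteriorAlgebra.map
          ((g : EuclideanSpace ℝ (Fin n) →ₗ[ℝ] EuclideanSpace ℝ (Fin n)))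
          (changeForm (thQe n) (tau n * contractLeft (Q := euclQ n)
            (QuadraticMap.associated (R := ℝ) (-(euclQ n)) v
              - QuadraticMap.associated (R := ℝ) (-(opQ ginv)) v) x)) := by
    have h := IH2
    rw [Lmap_apply, Rmap_apply] at h
    exact h
  -- key contraction identities
  have hK2 : contractLeft (Q := euclQ n)
      (QuadraticMap.associated (R := ℝ) (-(euclQ n)) (v - ginv v)) (tau n)
      = -(ι (euclQ n) (v - ginv v) * tau n) := by
    have h1 : changeForm (thQe n) (ι (euclQ n) (v - ginv v) * tau n)
        = - contractLeft (Q := (0 : QuadraticForm ℝ (EuclideanSpace ℝ (Fin n))))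
            (QuadraticMap.associated (R := ℝ) (-(euclQ n)) (v - ginv v)) (omeg n) := by
      rw [changeForm_ι_mul, aux_e_tau, aux_iota_omeg, zero_sub]
    refine aux_cf_inj (thQe n) ?_
    calc changeForm (thQe n) (contractLeft (Q := euclQ n)
          (QuadraticMap.associated (R := ℝ) (-(euclQ n)) (v - ginv v)) (tau n))
        = contractLeft (Q := (0 : QuadraticForm ℝ (EuclideanSpace ℝ (Fin n))))
            (QuadraticMap.associated (R := ℝ) (-(euclQ n)) (v - ginv v)) (omeg n) := by
          rw [changeForm_contractLeft, aux_e_tau]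
      _ = - - contractLeft (Q := (0 : QuadraticForm ℝ (EuclideanSpace ℝ (Fin n))))
            (QuadraticMap.associated (R := ℝ) (-(euclQ n)) (v - ginv v)) (omeg n) :=
          (neg_neg _).symm
      _ = - changeForm (thQe n) (ι (euclQ n) (v - ginv v) * tau n) := by rw [h1]
      _ = changeForm (thQe n) (-(ι (euclQ n) (v - ginv v) * tau n)) := (map_neg _ _).symm
  have hleib := aux_contract_mul (Q := euclQ n)
    (QuadraticMap.associated (R := ℝ) (-(euclQ n)) (v - ginv v)) (tau n) x
  rw [hK2, aux_invol_tau, smul_mul_assoc, neg_mul, mul_assoc] at hleib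
  have hsolve : tau n * contractLeft (Q := euclQ n)
      (QuadraticMap.associated (R := ℝ) (-(euclQ n)) (v - ginv v)) x
      = ((-1 : ℝ)) ^ n • (contractLeft (Q := euclQ n)
          (QuadraticMap.associated (R := ℝ) (-(euclQ n)) (v - ginv v)) (tau n * x)
        + ι (euclQ n) (v - ginv v) * (tau n * x)) := by
    rw [hleib,
      show ∀ A B : Mv n, -A + B + A = B from fun A B => by abel,
      smul_smul, aux_pow_neg_one_sq, one_smul]
  have hK : ExteriorAlgebra.map
      ((g : EuclideanSpace ℝ (Fin n) →ₗ[ℝ] EuclideanSpace ℝ (Fin n)))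
      (changeForm (thQe n) (tau n * contractLeft (Q := euclQ n)
        (QuadraticMap.associated (R := ℝ) (-(euclQ n)) v
          - QuadraticMap.associated (R := ℝ) (-(opQ ginv)) v) x))
      = ((-1 : ℝ)) ^ n •
          (ι (0 : QuadraticForm ℝ (EuclideanSpace ℝ (Fin n)))
              ((g : EuclideanSpace ℝ (Fin n) →ₗ[ℝ] EuclideanSpace ℝ (Fin n)) v) *
            ExteriorAlgebra.map
              ((g : EuclideanSpace ℝ (Fin n) →ₗ[ℝ] EuclideanSpace ℝ (Fin n)))
              (changeForm (thQe n) (tau n * x))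
          - ι (0 : QuadraticForm ℝ (EuclideanSpace ℝ (Fin n))) v *
            ExteriorAlgebra.map
              ((g : EuclideanSpace ℝ (Fin n) →ₗ[ℝ] EuclideanSpace ℝ (Fin n)))
              (changeForm (thQe n) (tau n * x))) := by
    rw [hdual2, hsolve, map_smul, map_add, changeForm_ι_mul, changeForm_contractLeft,
      show ∀ A B : ExteriorAlgebra ℝ (EuclideanSpace ℝ (Fin n)), A + (B - A) = B from
        fun A B => by abel,
      map_smul, map_mul,
      show ExteriorAlgebra.map
          ((g : EuclideanSpace ℝ (Fin n) →ₗ[ℝ] EuclideanSpace ℝ (Fin n)))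
          (ι (0 : QuadraticForm ℝ (EuclideanSpace ℝ (Fin n))) (v - ginv v))
        = ι (0 : QuadraticForm ℝ (EuclideanSpace ℝ (Fin n)))
            ((g : EuclideanSpace ℝ (Fin n) →ₗ[ℝ] EuclideanSpace ℝ (Fin n)) (v - ginv v)) from
        ExteriorAlgebra.map_apply_ι _ _,
      show ((g : EuclideanSpace ℝ (Fin n) →ₗ[ℝ] EuclideanSpace ℝ (Fin n)) (v - ginv v))
        = (g : EuclideanSpace ℝ (Fin n) →ₗ[ℝ] EuclideanSpace ℝ (Fin n)) v - v from by
        rw [map_sub]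
        congr 1
        exact hgg v,
      map_sub, sub_mul]
  -- right-hand side expansion
  have hR : (cdet g)⁻¹ • ExteriorAlgebra.map
      ((g : EuclideanSpace ℝ (Fin n) →ₗ[ℝ] EuclideanSpace ℝ (Fin n)))
      (changeForm (thQe n) (tau n * (ι (euclQ n) v * x)))
      = ((-1 : ℝ)) ^ (n + 1) •
          ((cdet g)⁻¹ • (ι (0 : QuadraticForm ℝ (EuclideanSpace ℝ (Fin n)))
              ((g : EuclideanSpace ℝ (Fin n) →ₗ[ℝ] EuclideanSpace ℝ (Fin n)) v) *
            ExteriorAlgebra.map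
              ((g : EuclideanSpace ℝ (Fin n) →ₗ[ℝ] EuclideanSpace ℝ (Fin n)))
              (changeForm (thQe n) (tau n * x)))
          - (cdet g)⁻¹ • contractLeft (Q := (0 : QuadraticForm ℝ (EuclideanSpace ℝ (Fin n))))
              (QuadraticMap.associated (R := ℝ) (-(opQ ginv)) v)
              (ExteriorAlgebra.map
                ((g : EuclideanSpace ℝ (Fin n) →ₗ[ℝ] EuclideanSpace ℝ (Fin n)))
                (changeForm (thQe n) (tau n * x)))) := by
    rw [← mul_assoc, aux_tau_comm, smul_mul_assoc, mul_assoc, map_smul, changeForm_ι_mul,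
      map_smul, map_sub, map_mul,
      show ExteriorAlgebra.map
          ((g : EuclideanSpace ℝ (Fin n) →ₗ[ℝ] EuclideanSpace ℝ (Fin n)))
          (ι (0 : QuadraticForm ℝ (EuclideanSpace ℝ (Fin n))) v)
        = ι (0 : QuadraticForm ℝ (EuclideanSpace ℝ (Fin n)))
            ((g : EuclideanSpace ℝ (Fin n) →ₗ[ℝ] EuclideanSpace ℝ (Fin n)) v) from
        ExteriorAlgebra.map_apply_ι _ _,
      aux_map_contract
        ((g : EuclideanSpace ℝ (Fin n) →ₗ[ℝ] EuclideanSpace ℝ (Fin n)))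
        ((ginv : EuclideanSpace ℝ (Fin n) →ₗ[ℝ] EuclideanSpace ℝ (Fin n)))
        (fun w => hig w),
      hdual1, smul_comm ((cdet g)⁻¹), smul_sub]
  -- assemble
  rw [Lmap_apply, Rmap_apply, hT, mul_sub, map_sub, ← mul_assoc, hwcomm, smul_mul_assoc,
    mul_assoc, map_smul, changeForm_ι_mul, hLx, ← hTc, hIH2u, hK, hR]
  simp only [mul_smul_comm, map_smul]
  rw [pow_succ]
  module

set_option maxHeartbeats 2000000 in
theorem aux_main (g ginv : EuclideanSpace ℝ (Fin n) →L[ℝ] EuclideanSpace ℝ (Fin n))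
    (hsym : ∀ u v, (inner ℝ (g u) v : ℝ) = inner ℝ u (g v))
    (hinv : g.comp ginv = ContinuousLinearMap.id ℝ _ ∧
            ginv.comp g = ContinuousLinearMap.id ℝ _) (Y : Mv n) :
    Lmap ginv Y = Rmap g ginv Y := by
  have hgg : ∀ w, g (ginv w) = w := fun w => by
    have := ContinuousLinearMap.ext_iff.mp hinv.1 w
    simpa using this
  have hig : ∀ w, ginv (g w) = w := fun w => by
    have := ContinuousLinearMap.ext_iff.mp hinv.2 w
    simpa using this
  have hdet : cdet g ≠ 0 := aux_det_ne g ginv hinv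
  have hgs := aux_ginv_symm g ginv hsym hinv
  -- symmetry of the bilinear form used for the metric algebra
  have hBp'sym : ∀ a b : EuclideanSpace ℝ (Fin n),
      (-(QuadraticMap.associated (R := ℝ) (-(opQ ginv)))) a b
        = (-(QuadraticMap.associated (R := ℝ) (-(opQ ginv)))) b a := by
    intro a b
    simp only [LinearMap.neg_apply, aux_B0'_apply g ginv hsym hinv, neg_neg]
    rw [← hgs a b, real_inner_comm]
  -- dual identities
  have hdual1 : ∀ v : EuclideanSpace ℝ (Fin n),
      (QuadraticMap.associated (R := ℝ) (-(euclQ n)) v) ∘ₗ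
        ((ginv : EuclideanSpace ℝ (Fin n) →ₗ[ℝ] EuclideanSpace ℝ (Fin n)))
      = QuadraticMap.associated (R := ℝ) (-(opQ ginv)) v := by
    intro v
    ext w
    simp only [LinearMap.comp_apply, ContinuousLinearMap.coe_coe, aux_B0_apply,
      aux_B0'_apply g ginv hsym hinv]
  have hdual2 : ∀ v : EuclideanSpace ℝ (Fin n),
      QuadraticMap.associated (R := ℝ) (-(euclQ n)) v
        - QuadraticMap.associated (R := ℝ) (-(opQ ginv)) v
      = QuadraticMap.associated (R := ℝ) (-(euclQ n)) (v - ginv v) := by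
    intro v
    ext w
    simp only [LinearMap.sub_apply, aux_B0_apply, aux_B0'_apply g ginv hsym hinv]
    rw [inner_sub_left, ← hgs v w]
    ring
  have key : ∀ k : ℕ, ∀ Y ∈ LinearMap.range (ι (euclQ n)) ^ k, Lmap ginv Y = Rmap g ginv Y := by
    intro k
    induction k using Nat.strong_induction_on with
    | _ k IH =>
      cases k with
      | zero =>
          intro Y hY
          rw [pow_zero] at hY
          obtain ⟨r, rfl⟩ := Submodule.mem_one.mp hY
          rw [Lmap_apply, Rmap_apply, changeForm_algebraMap, changeForm_algebraMap,
            show wps ginv * algebraMap ℝ _ r = r • wps ginv from by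
              rw [← Algebra.commutes, ← Algebra.smul_def],
            map_smul,
            show changeForm (thQp ginv) (wps ginv) = omeg n from
              aux_cf_cancel (thQp ginv) (omeg n),
            show tau n * algebraMap ℝ _ r = r • tau n from by
              rw [← Algebra.commutes, ← Algebra.smul_def],
            map_smul, aux_e_tau, map_smul, aux_map_omeg, ← aux_cdet g,
            smul_smul, smul_smul, mul_comm ((cdet g)⁻¹) r, mul_assoc, inv_mul_cancel₀ hdet, mul_one]
      | succ k =>
          intro Y hY
          rw [pow_succ'] at hY
          refine Submodule.mul_induction_on hY (fun m hm x hx => ?_)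
            (fun a b hA hB => by rw [map_add, map_add, hA, hB])
          obtain ⟨v, rfl⟩ := hm
          -- Induction hypotheses
          have IH1 : Lmap ginv x = Rmap g ginv x :=
            IH k (Nat.lt_succ_self k) x hx
          have hcx : contractLeft (Q := euclQ n)
              (QuadraticMap.associated (R := ℝ) (-(euclQ n)) v
                - QuadraticMap.associated (R := ℝ) (-(opQ ginv)) v) x
              ∈ LinearMap.range (ι (euclQ n)) ^ (k - 1) :=
            aux_contract_pow _ k x hx
          have IH2 : Lmap ginv (contractLeft (Q := euclQ n)
              (QuadraticMap.associated (R := ℝ) (-(euclQ n)) v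
                - QuadraticMap.associated (R := ℝ) (-(opQ ginv)) v) x)
              = Rmap g ginv (contractLeft (Q := euclQ n)
              (QuadraticMap.associated (R := ℝ) (-(euclQ n)) v
                - QuadraticMap.associated (R := ℝ) (-(opQ ginv)) v) x) :=
            IH (k - 1) (lt_of_le_of_lt (Nat.sub_le k 1) (Nat.lt_succ_self k)) _ hcx
          exact aux_step g ginv hsym hinv v x IH1 IH2
  have hY : Y ∈ (⊤ : Submodule ℝ (Mv n)) := Submodule.mem_top
  rw [← iSup_ι_range_eq_top] at hY
  induction hY using Submodule.iSup_induction' with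
  | mem i x hx => exact key i x hx
  | zero => rw [map_zero, map_zero]
  | add x y _ _ ihx ihy => rw [map_add, map_add, ihx, ihy]

end Main

theorem pseudoscalar_gInv_product {n : ℕ}
    (g ginv : EuclideanSpace ℝ (Fin n) →L[ℝ] EuclideanSpace ℝ (Fin n))
    (hsym : ∀ u v, (inner ℝ (g u) v : ℝ) = inner ℝ u (g v))
    (hinv : g.comp ginv = ContinuousLinearMap.id ℝ _ ∧
            ginv.comp g = ContinuousLinearMap.id ℝ _)
    (I : Mv n) (hI : ∃ c : ℝ, I = c • tau n) (Y : Mv n) :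
    cmulQ (opQ ginv) I Y = (cdet g)⁻¹ • gext (g : _ →ₗ[ℝ] _) (I * Y) := by
  obtain ⟨c, rfl⟩ := hI
  have hτ : cmulQ (opQ ginv) (tau n) Y = (cdet g)⁻¹ • gext (g : _ →ₗ[ℝ] _) (tau n * Y) := by
    have hmain := aux_main g ginv hsym hinv Y
    rw [Lmap_apply, Rmap_apply, wps_def] at hmain
    unfold cmulQ gext
    simp only [LinearMap.coe_comp, Function.comp_apply, LinearEquiv.coe_coe,
      AlgHom.toLinearMap_apply]
    rw [← map_smul ((equivExterior (euclQ n)).symm)]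
    refine congrArg ⇑(equivExterior (euclQ n)).symm ?_
    simp only [equivExterior, changeFormEquiv_symm, changeFormEquiv_apply]
    rw [aux_e_tau]
    exact hmain
  calc cmulQ (opQ ginv) (c • tau n) Y
      = c • cmulQ (opQ ginv) (tau n) Y := by
        unfold cmulQ
        rw [map_smul, map_smul, smul_mul_assoc, map_smul, map_smul]
    _ = c • ((cdet g)⁻¹ • gext (g : _ →ₗ[ℝ] _) (tau n * Y)) := by rw [hτ]
    _ = (cdet g)⁻¹ • gext (g : _ →ₗ[ℝ] _) ((c • tau n) * Y) := by
        rw [smul_mul_assoc, map_smul, smul_comm]
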